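/- Let q be an odd prime power, n coprime to q, and let C_a ⊆ F_q^{2n} be the double negacirculant code generated as an R-module by (1, a(x)) in R^2, where R = F_q[x]/⟨x^n + 1⟩. Then C_a is LCD (i.e. C_a ∩ C_a^⊥ = {0} for the Euclidean inner product) if and only if gcd(1 + a(x)·a(-x^{n-1}), x^n + 1) = 1 in F_q[x]. -/

import Mathlib

open Polynomial

lemma X_pow_add_one_ne_zero (F : Type*) [Field F] {n : ℕ} (hn : 0 < n) :
    (X ^ n + 1 : F[X]) ≠ 0 := by
  have h : (X ^ n + 1 : F[X]) = X ^ n + C 1 := by simp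
  intro hzero
  have := natDegree_X_pow_add_C (n := n) (r := (1 : F))
  rw [← h, hzero] at this
  simp at this
  omega

/-- The Euclidean inner product on `F_q[x]/⟨f⟩` given by coefficientwise expansion
in the power basis `1, x, …, x^{deg f - 1}`. -/
noncomputable def iprod {F : Type*} [Field F] {f : F[X]} (hf : f ≠ 0)
    (x y : AdjoinRoot f) : F :=
  ((AdjoinRoot.powerBasis hf).basis.repr x).sum
    fun i c => c * ((AdjoinRoot.powerBasis hf).basis.repr y) i

namespace DNC

variable {F : Type*} [Field F] {n : ℕ}

lemma nd (hn : 0 < n) : (X ^ n + 1 : F[X]).natDegree = n := by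
  have h : (X ^ n + 1 : F[X]) = X ^ n + C 1 := by simp
  rw [h, natDegree_X_pow_add_C]

lemma root_pow (hn : 0 < n) :
    (AdjoinRoot.root (X ^ n + 1 : F[X])) ^ n = -1 := by
  have h := AdjoinRoot.mk_self (f := (X ^ n + 1 : F[X]))
  rw [map_add, map_pow, AdjoinRoot.mk_X, map_one] at h
  linear_combination h

lemma sig_cond (hn : 0 < n) :
    (X ^ n + 1 : F[X]).eval₂ (algebraMap F (AdjoinRoot (X ^ n + 1 : F[X])))
      (-(AdjoinRoot.root (X ^ n + 1 : F[X])) ^ (n - 1)) = 0 := by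
  set r := AdjoinRoot.root (X ^ n + 1 : F[X])
  have h1 : (-(r ^ (n-1))) ^ n = -1 := by
    rw [neg_pow, ← pow_mul]
    have : (n - 1) * n = n * (n - 1) := Nat.mul_comm _ _
    rw [this, pow_mul, root_pow hn]
    have : (-1 : AdjoinRoot (X ^ n + 1 : F[X])) ^ n * (-1) ^ (n - 1)
        = (-1) ^ (n + (n - 1)) := by rw [pow_add]
    rw [this, Odd.neg_one_pow ⟨n - 1, by omega⟩]
  simp [h1]

noncomputable def sig (hn : 0 < n) :
    AdjoinRoot (X ^ n + 1 : F[X]) →+* AdjoinRoot (X ^ n + 1 : F[X]) :=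
  AdjoinRoot.lift (algebraMap F _) (-(AdjoinRoot.root (X ^ n + 1 : F[X])) ^ (n - 1))
    (sig_cond hn)

lemma sig_root (hn : 0 < n) :
    sig hn (AdjoinRoot.root (X ^ n + 1 : F[X]))
      = -(AdjoinRoot.root (X ^ n + 1 : F[X])) ^ (n - 1) :=
  AdjoinRoot.lift_root _

lemma sig_mk (hn : 0 < n) (p : F[X]) :
    sig hn (AdjoinRoot.mk _ p) = AdjoinRoot.mk _ (p.comp (-(X ^ (n - 1)))) := by
  rw [Polynomial.comp, Polynomial.hom_eval₂]
  rw [show ((AdjoinRoot.mk (X ^ n + 1 : F[X])).comp C)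
      = algebraMap F (AdjoinRoot (X ^ n + 1 : F[X])) from rfl]
  rw [show (AdjoinRoot.mk (X ^ n + 1 : F[X])) (-(X ^ (n-1)))
      = -(AdjoinRoot.root (X ^ n + 1 : F[X])) ^ (n - 1) by
    rw [map_neg, map_pow, AdjoinRoot.mk_X]]
  rw [sig, AdjoinRoot.lift_mk]

lemma sig_smul (hn : 0 < n) (c : F) (x : AdjoinRoot (X ^ n + 1 : F[X])) :
    sig hn (c • x) = c • sig hn x := by
  rw [Algebra.smul_def, map_mul, Algebra.smul_def]
  congr 1
  rw [AdjoinRoot.algebraMap_eq, sig, AdjoinRoot.lift_of, ← AdjoinRoot.algebraMap_eq]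

end DNC

namespace DNC

variable {F : Type*} [Field F] {n : ℕ}

lemma hd (hn : 0 < n) :
    0 < (AdjoinRoot.powerBasis (X_pow_add_one_ne_zero F hn)).dim := by
  rw [AdjoinRoot.powerBasis_dim, nd hn]; exact hn

noncomputable def phiL (hn : 0 < n) :
    AdjoinRoot (X ^ n + 1 : F[X]) →ₗ[F] F :=
  (Finsupp.lapply (⟨0, hd hn⟩ :
      Fin (AdjoinRoot.powerBasis (X_pow_add_one_ne_zero F hn)).dim)).comp
    (AdjoinRoot.powerBasis (X_pow_add_one_ne_zero F hn)).basis.repr.toLinearMap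

lemma phi_basis (hn : 0 < n)
    (j : Fin (AdjoinRoot.powerBasis (X_pow_add_one_ne_zero F hn)).dim) :
    phiL hn ((AdjoinRoot.powerBasis (X_pow_add_one_ne_zero F hn)).basis j)
      = if (j : ℕ) = 0 then 1 else 0 := by
  simp only [phiL, LinearMap.coe_comp, Function.comp_apply, LinearEquiv.coe_coe, Module.Basis.repr_self]
  simp [Finsupp.single_apply, Fin.ext_iff, eq_comm]

lemma gen_pow_n (hn : 0 < n) :
    (AdjoinRoot.powerBasis (X_pow_add_one_ne_zero F hn)).gen ^ n = -1 := by
  rw [AdjoinRoot.powerBasis_gen]; exact root_pow hn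

lemma pow_reduce (hn : 0 < n) (e : ℕ) :
    (AdjoinRoot.powerBasis (X_pow_add_one_ne_zero F hn)).gen ^ e
      = (-1) ^ (e / n) * (AdjoinRoot.powerBasis (X_pow_add_one_ne_zero F hn)).gen ^ (e % n) := by
  conv_lhs => rw [show e = n * (e / n) + e % n from (Nat.div_add_mod e n).symm]
  rw [pow_add, pow_mul, gen_pow_n hn]

lemma phi_gen_pow (hn : 0 < n) (k : ℕ) (hk : k < n) :
    phiL hn ((AdjoinRoot.powerBasis (X_pow_add_one_ne_zero F hn)).gen ^ k)
      = if k = 0 then 1 else 0 := by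
  have hk' : k < (AdjoinRoot.powerBasis (X_pow_add_one_ne_zero F hn)).dim := by
    rw [AdjoinRoot.powerBasis_dim, nd hn]; exact hk
  have := phi_basis hn ⟨k, hk'⟩
  rw [PowerBasis.coe_basis] at this
  exact this

end DNC

namespace DNC

variable {F : Type*} [Field F] {n : ℕ}

lemma sig_gen (hn : 0 < n) :
    sig hn ((AdjoinRoot.powerBasis (X_pow_add_one_ne_zero F hn)).gen)
      = -(AdjoinRoot.powerBasis (X_pow_add_one_ne_zero F hn)).gen ^ (n - 1) := by
  rw [AdjoinRoot.powerBasis_gen]; exact sig_root hn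

lemma neg_one_pow_smul (hn : 0 < n) (m : ℕ) (x : AdjoinRoot (X ^ n + 1 : F[X])) :
    ((-1 : AdjoinRoot (X ^ n + 1 : F[X])) ^ m) * x = ((-1 : F) ^ m) • x := by
  rw [Algebra.smul_def, map_pow, map_neg, map_one]

lemma phi_basis_prod (hn : 0 < n)
    (i j : Fin (AdjoinRoot.powerBasis (X_pow_add_one_ne_zero F hn)).dim) :
    phiL hn ((AdjoinRoot.powerBasis (X_pow_add_one_ne_zero F hn)).basis i
        * sig hn ((AdjoinRoot.powerBasis (X_pow_add_one_ne_zero F hn)).basis j))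
      = if i = j then 1 else 0 := by
  have hi : (i : ℕ) < n := by simpa [AdjoinRoot.powerBasis_dim, nd hn] using i.2
  have hj : (j : ℕ) < n := by simpa [AdjoinRoot.powerBasis_dim, nd hn] using j.2
  simp only [PowerBasis.coe_basis]
  rw [map_pow, sig_gen hn, neg_pow, ← pow_mul]
  have key : (AdjoinRoot.powerBasis (X_pow_add_one_ne_zero F hn)).gen ^ (i : ℕ) * ((-1) ^ (j : ℕ) * (AdjoinRoot.powerBasis (X_pow_add_one_ne_zero F hn)).gen ^ ((n - 1) * (j : ℕ)))
      = (-1) ^ ((j : ℕ) + (↑i + (n - 1) * ↑j) / n) * (AdjoinRoot.powerBasis (X_pow_add_one_ne_zero F hn)).gen ^ ((↑i + (n - 1) * ↑j) % n) := by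
    rw [pow_add, mul_assoc, ← pow_reduce hn ((i : ℕ) + (n - 1) * (j : ℕ)), pow_add]
    ring
  rw [key, neg_one_pow_smul hn, map_smul, phi_gen_pow hn _ (Nat.mod_lt _ hn)]
  by_cases hij : i = j
  · subst hij
    have he : (↑i + (n - 1) * ↑i) = (i : ℕ) * n := by
      have h1 : (n - 1) * (i : ℕ) = n * i - i := by rw [Nat.sub_mul, one_mul]
      have h2 : (i : ℕ) ≤ n * i := Nat.le_mul_of_pos_left _ hn
      have h5 : (i:ℕ) * n = n * i := Nat.mul_comm _ _
      omega
    rw [he]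
    rw [Nat.mul_mod_left, Nat.mul_div_cancel _ hn, if_pos rfl, if_pos rfl,
      Even.neg_one_pow ⟨(i:ℕ), rfl⟩, one_smul]
  · have hne : (↑i + (n - 1) * ↑j) % n ≠ 0 := by
      have hij' : (i : ℕ) ≠ (j : ℕ) := fun h => hij (Fin.ext h)
      rcases Nat.lt_or_ge (i : ℕ) (j : ℕ) with h | h
      · -- i < j : e = (j-1)*n + (n + i - j)
        have h1 : (n - 1) * (j : ℕ) = n * j - j := by rw [Nat.sub_mul, one_mul]
        have h2 : ((j : ℕ) - 1) * n = j * n - n := by rw [Nat.sub_mul, one_mul]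
        have h3 : (j : ℕ) ≤ n * j := Nat.le_mul_of_pos_left _ hn
        have h4 : n ≤ (j:ℕ) * n := Nat.le_mul_of_pos_left _ (by omega)
        have h5 : (n : ℕ) * j = j * n := Nat.mul_comm _ _
        have he : (↑i + (n - 1) * ↑j) = ((j:ℕ) - 1) * n + (n + ↑i - ↑j) := by omega
        rw [he, show ((j:ℕ) - 1) * n + (n + ↑i - ↑j) = (n + ↑i - ↑j) + ((j:ℕ)-1) * n by ring,
          Nat.add_mul_mod_self_right, Nat.mod_eq_of_lt (by omega)]
        omega
      · -- i > j : e = j*n + (i - j)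
        have h1 : (n - 1) * (j : ℕ) = n * j - j := by rw [Nat.sub_mul, one_mul]
        have h3 : (j : ℕ) ≤ n * j := by
          rcases Nat.eq_zero_or_pos (j:ℕ) with h0 | h0
          · omega
          · exact Nat.le_mul_of_pos_left _ hn
        have h5 : (n : ℕ) * j = j * n := Nat.mul_comm _ _
        have he : (↑i + (n - 1) * ↑j) = (↑i - ↑j) + (j:ℕ) * n := by omega
        rw [he, Nat.add_mul_mod_self_right, Nat.mod_eq_of_lt (by omega)]
        omega
    rw [if_neg hne, if_neg hij]
    simp

end DNC

namespace DNC

variable {F : Type*} [Field F] {n : ℕ}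

lemma iprod_eq_sum (hn : 0 < n) (x y : AdjoinRoot (X ^ n + 1 : F[X])) :
    iprod (X_pow_add_one_ne_zero F hn) x y
      = ∑ i, ((AdjoinRoot.powerBasis (X_pow_add_one_ne_zero F hn)).basis.repr x) i
          * ((AdjoinRoot.powerBasis (X_pow_add_one_ne_zero F hn)).basis.repr y) i :=
  Finsupp.sum_fintype _ _ (by intro i; simp)

set_option synthInstance.maxHeartbeats 1000000 in
lemma iprod_key (hn : 0 < n) (x y : AdjoinRoot (X ^ n + 1 : F[X])) :
    iprod (X_pow_add_one_ne_zero F hn) x y = phiL hn (x * sig hn y) := by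
  set b := (AdjoinRoot.powerBasis (X_pow_add_one_ne_zero F hn)).basis with hb
  conv_rhs => rw [← Module.Basis.sum_repr b x, ← Module.Basis.sum_repr b y]
  rw [map_sum (sig hn) _ Finset.univ]
  have hsig : ∀ j, sig hn ((b.repr y) j • b j) = (b.repr y) j • sig hn (b j) :=
    fun j => sig_smul hn _ _
  rw [Finset.sum_congr rfl (fun j _ => hsig j)]
  rw [Finset.sum_mul_sum]
  have hterm : ∀ i j, (b.repr x) i • b i * (b.repr y) j • sig hn (b j)
      = ((b.repr x) i * (b.repr y) j) • (b i * sig hn (b j)) :=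
    fun i j => smul_mul_smul_comm _ _ _ _
  rw [Finset.sum_congr rfl (fun i _ => Finset.sum_congr rfl (fun j _ => hterm i j))]
  rw [map_sum]
  have : ∀ i, phiL hn (∑ j, ((b.repr x) i * (b.repr y) j) • (b i * sig hn (b j)))
      = (b.repr x) i * (b.repr y) i := by
    intro i
    rw [map_sum]
    have : ∀ j, phiL hn (((b.repr x) i * (b.repr y) j) • (b i * sig hn (b j)))
        = ((b.repr x) i * (b.repr y) j) * (if i = j then 1 else 0) := by
      intro j
      rw [map_smul, phi_basis_prod hn i j, smul_eq_mul]
    rw [Finset.sum_congr rfl (fun j _ => this j)]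
    simp [mul_ite]
  rw [Finset.sum_congr rfl (fun i _ => this i), iprod_eq_sum hn]

lemma iprod_zero_left (hn : 0 < n) (y : AdjoinRoot (X ^ n + 1 : F[X])) :
    iprod (X_pow_add_one_ne_zero F hn) 0 y = 0 := by
  simp [iprod_eq_sum hn]

lemma eq_zero_of_iprod (hn : 0 < n) (x : AdjoinRoot (X ^ n + 1 : F[X]))
    (h : ∀ y, iprod (X_pow_add_one_ne_zero F hn) x y = 0) : x = 0 := by
  set b := (AdjoinRoot.powerBasis (X_pow_add_one_ne_zero F hn)).basis with hb
  apply b.ext_elem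
  intro j
  have := h (b j)
  rw [iprod_eq_sum hn] at this
  simp only [hb, Module.Basis.repr_self] at this
  rw [map_zero]
  simpa [Finsupp.single_apply] using this

lemma ortho_sum (hn : 0 < n) (A r s : AdjoinRoot (X ^ n + 1 : F[X])) :
    iprod (X_pow_add_one_ne_zero F hn) r s
        + iprod (X_pow_add_one_ne_zero F hn) (r * A) (s * A)
      = iprod (X_pow_add_one_ne_zero F hn) (r * (1 + A * sig hn A)) s := by
  rw [iprod_key hn, iprod_key hn, iprod_key hn, map_mul (sig hn), ← map_add]
  congr 1
  ring

end DNC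

/-- Characterization of LCD double negacirculant codes: with `R = F_q[x]/⟨x^n+1⟩`,
`q` odd, `gcd(n,q) = 1`, the code `C_a = {(f, f·a) : f ∈ R} ⊆ F_q^{2n}` is LCD
(trivial intersection with its Euclidean dual) iff
`gcd(1 + a(x)·a(-x^{n-1}), x^n + 1) = 1`. -/
theorem stmt_10 (q n : ℕ) (hq : Odd q) (hn : 0 < n) (hco : Nat.Coprime n q)
    (F : Type*) [Field F] [Fintype F] (hF : Fintype.card F = q) (a : F[X]) :
    (∀ v : AdjoinRoot (X ^ n + 1 : F[X]) × AdjoinRoot (X ^ n + 1 : F[X]),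
        (∃ r, v = (r, r * AdjoinRoot.mk (X ^ n + 1 : F[X]) a)) →
        (∀ w : AdjoinRoot (X ^ n + 1 : F[X]) × AdjoinRoot (X ^ n + 1 : F[X]),
          (∃ r, w = (r, r * AdjoinRoot.mk (X ^ n + 1 : F[X]) a)) →
          iprod (X_pow_add_one_ne_zero F hn) v.1 w.1
            + iprod (X_pow_add_one_ne_zero F hn) v.2 w.2 = 0) →
        v = 0)
      ↔ IsCoprime (1 + a * a.comp (-(X ^ (n - 1)))) (X ^ n + 1 : F[X]) := by
  classical
  set A : AdjoinRoot (X ^ n + 1 : F[X]) := AdjoinRoot.mk _ a with hA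
  set u : AdjoinRoot (X ^ n + 1 : F[X]) := 1 + A * DNC.sig hn A with huu
  have hu : AdjoinRoot.mk (X ^ n + 1 : F[X]) (1 + a * a.comp (-(X ^ (n - 1)))) = u := by
    rw [map_add, map_one, map_mul, ← DNC.sig_mk hn a]
  constructor
  · intro hlcd
    by_contra hnc
    set u' : F[X] := 1 + a * a.comp (-(X ^ (n - 1))) with hu'
    set g : F[X] := EuclideanDomain.gcd u' (X ^ n + 1 : F[X]) with hg
    have hgu : ¬ IsUnit g := fun h => hnc ((EuclideanDomain.gcd_isUnit_iff).mp h)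
    obtain ⟨c, hc⟩ : g ∣ (X ^ n + 1 : F[X]) := EuclideanDomain.gcd_dvd_right _ _
    have hf0 : (X ^ n + 1 : F[X]) ≠ 0 := X_pow_add_one_ne_zero F hn
    have hc0 : c ≠ 0 := by rintro rfl; rw [mul_zero] at hc; exact hf0 hc
    have hg0 : g ≠ 0 := by intro h0; rw [h0, zero_mul] at hc; exact hf0 hc
    have hgdeg : 1 ≤ g.natDegree := by
      rcases Nat.eq_zero_or_pos g.natDegree with h0 | h0
      · exfalso
        apply hgu
        rw [Polynomial.eq_C_of_natDegree_eq_zero h0]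
        have : g.coeff 0 ≠ 0 := by
          intro hh
          apply hg0
          rw [Polynomial.eq_C_of_natDegree_eq_zero h0, hh, map_zero]
        exact (Polynomial.isUnit_C).mpr (isUnit_iff_ne_zero.mpr this)
      · omega
    have hr0 : AdjoinRoot.mk (X ^ n + 1 : F[X]) c ≠ 0 := by
      rw [Ne, AdjoinRoot.mk_eq_zero]
      intro hdvd
      have h1 := Polynomial.natDegree_le_of_dvd hdvd hc0
      have h2 : (X ^ n + 1 : F[X]).natDegree = g.natDegree + c.natDegree := by
        rw [hc, Polynomial.natDegree_mul hg0 hc0]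
      omega
    have hru : AdjoinRoot.mk (X ^ n + 1 : F[X]) c * u = 0 := by
      rw [← hu, ← map_mul, AdjoinRoot.mk_eq_zero]
      obtain ⟨e, he⟩ : g ∣ u' := EuclideanDomain.gcd_dvd_left _ _
      exact ⟨e, by rw [hc, he]; ring⟩
    apply hr0
    have hv := hlcd (AdjoinRoot.mk (X ^ n + 1 : F[X]) c,
        AdjoinRoot.mk (X ^ n + 1 : F[X]) c * A) ⟨_, rfl⟩ ?_
    · exact congrArg Prod.fst hv
    · rintro w ⟨s, rfl⟩
      show iprod _ (AdjoinRoot.mk (X ^ n + 1 : F[X]) c) s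
          + iprod _ (AdjoinRoot.mk (X ^ n + 1 : F[X]) c * A) (s * A) = 0
      rw [DNC.ortho_sum hn A, ← huu, hru, DNC.iprod_zero_left hn]
  · rintro hcop v ⟨r, rfl⟩ horth
    obtain ⟨p, p', hpq⟩ := hcop
    have hup : AdjoinRoot.mk (X ^ n + 1 : F[X]) p * u = 1 := by
      have := congrArg (AdjoinRoot.mk (X ^ n + 1 : F[X])) hpq
      rw [map_add, map_mul, map_mul, AdjoinRoot.mk_self, mul_zero, add_zero, map_one, hu] at this
      exact this
    have hr : ∀ s, iprod (X_pow_add_one_ne_zero F hn) (r * u) s = 0 := by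
      intro s
      have h := DNC.ortho_sum hn A r s
      rw [← huu] at h
      rw [← h]
      exact horth (s, s * A) ⟨s, rfl⟩
    have hru : r * u = 0 := DNC.eq_zero_of_iprod hn _ hr
    have hr0 : r = 0 := by
      calc r = r * (AdjoinRoot.mk (X ^ n + 1 : F[X]) p * u) := by rw [hup, mul_one]
      _ = (r * u) * AdjoinRoot.mk (X ^ n + 1 : F[X]) p := by ring
      _ = 0 := by rw [hru, zero_mul]
    rw [hr0, zero_mul]
    rfl
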